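/- Let λ ≥ 1 and ξ̄, ξ ∈ S^{n-1}. Define ψ_{ξ̄,λ}(x) = min(0, λ|x - ⟨x,ξ̄⟩ξ̄| - ⟨x,ξ̄⟩) for x ∈ S^{n-1}. If ψ_{ξ̄,λ}(ξ) < 0 (equivalently ξ is in the support of ψ_{ξ̄,λ} viewed through the strict inequality), then |ξ̄ - ξ| < √2/√(λ²+1). -/
import Mathlib


open Metric MeasureTheory RealInnerProductSpace

noncomputable section

/-- with `ψ_{ξ̄,λ}(x) = min(0, λ‖x - ⟪x,ξ̄⟫ξ̄‖ - ⟪x,ξ̄⟫)`, if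
`ψ_{ξ̄,λ}(ξ) < 0` then `‖ξ̄ - ξ‖ < √2/√(λ²+1)`. -/
theorem stmt_9 (n : ℕ) (hn : 2 ≤ n) (l : ℝ) (hl : 1 ≤ l)
    (ξbar ξ : EuclideanSpace ℝ (Fin n))
    (hξbar : ξbar ∈ sphere (0 : EuclideanSpace ℝ (Fin n)) 1)
    (hξ : ξ ∈ sphere (0 : EuclideanSpace ℝ (Fin n)) 1)
    (hsupp : min 0 (l * ‖ξ - ⟪ξ, ξbar⟫ • ξbar‖ - ⟪ξ, ξbar⟫) < 0) :
    ‖ξbar - ξ‖ < Real.sqrt 2 / Real.sqrt (l ^ 2 + 1) := by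
  set t : ℝ := ⟪ξ, ξbar⟫ with ht
  have hξ1 : ‖ξ‖ = 1 := by simpa using mem_sphere_zero_iff_norm.mp hξ
  have hb1 : ‖ξbar‖ = 1 := by simpa using mem_sphere_zero_iff_norm.mp hξbar
  -- extract the strict inequality
  have hlt : l * ‖ξ - t • ξbar‖ < t := by
    rcases min_lt_iff.mp hsupp with h | h
    · exact absurd h (lt_irrefl 0)
    · linarith
  have hr : (0:ℝ) ≤ ‖ξ - t • ξbar‖ := norm_nonneg _
  have ht0 : 0 < t := lt_of_le_of_lt (by positivity) hlt
  have ht1 : t ≤ 1 := by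
    have := real_inner_le_norm ξ ξbar
    rw [hξ1, hb1] at this; simpa using this
  have hr2 : ‖ξ - t • ξbar‖ ^ 2 = 1 - t ^ 2 := by
    rw [norm_sub_sq_real, real_inner_smul_right, norm_smul, hξ1, hb1, ← ht]
    simp [abs_of_pos ht0]
    ring
  -- square the inequality
  have hsq : l ^ 2 * (1 - t ^ 2) < t ^ 2 := by
    have h1 : (l * ‖ξ - t • ξbar‖) ^ 2 < t ^ 2 :=
      pow_lt_pow_left₀ hlt (by positivity) (by norm_num)
    calc l ^ 2 * (1 - t ^ 2) = (l * ‖ξ - t • ξbar‖) ^ 2 := by rw [mul_pow, hr2]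
    _ < t ^ 2 := h1
  have hl1 : (0:ℝ) < l ^ 2 + 1 := by positivity
  have htbig : l ^ 2 / (l ^ 2 + 1) < t := by
    have h2 : l ^ 2 / (l ^ 2 + 1) < t ^ 2 := by
      rw [div_lt_iff₀ hl1]; nlinarith
    nlinarith
  have hns : ‖ξbar - ξ‖ ^ 2 = 2 - 2 * t := by
    rw [norm_sub_sq_real, real_inner_comm, ← ht, hξ1, hb1]; ring
  have hkey : ‖ξbar - ξ‖ ^ 2 < 2 / (l ^ 2 + 1) := by
    rw [hns, lt_div_iff₀ hl1]; nlinarith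
  have hfin : ‖ξbar - ξ‖ < Real.sqrt (2 / (l ^ 2 + 1)) := by
    rw [show (2:ℝ) / (l ^ 2 + 1) = (2 / (l ^ 2 + 1)) by ring] at hkey
    exact (Real.lt_sqrt (norm_nonneg _)).mpr hkey
  rwa [Real.sqrt_div' 2 (le_of_lt hl1) ] at hfin
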